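/- Let m ≥ 1 be an odd integer and suppose q = 2^m and a = 2^{(m+1)/2} (the case a = √(2q), Frobenius angle θ = π/4). Then for every positive integer X, M(X)/2^{mX/2} equals: 1 if X ≡ 0 (mod 8); 2^{−m/2} if X ≡ 1 (mod 8); −1 + 2^{−(m−1)/2} if X ≡ 2 (mod 8); −√2 + 2^{−m/2} if X ≡ 3 (mod 8); −1 if X ≡ 4 (mod 8); −2^{−m/2} if X ≡ 5 (mod 8); 1 − 2^{−(m−1)/2} if X ≡ 6 (mod 8); √2 − 2^{−m/2} if X ≡ 7 (mod 8). -/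
import Mathlib


open Real Filter

/-- The coefficient sequence `c_N` with `c_0 = 1`, `c_1 = a - q - 1`,
`c_2 = a*c_1 - q*c_0 + q`, and `c_N = a*c_{N-1} - q*c_{N-2}` for `N ≥ 3`;
these are the Taylor coefficients at `u = 0` of `(1-u)(1-qu)/(1-au+qu²)`,
the reciprocal of the zeta function of an elliptic curve over `F_q` with
Frobenius trace `a`. -/
def mertC (q a : ℤ) : ℕ → ℤ
  | 0 => 1
  | 1 => a - q - 1
  | 2 => a * (a - q - 1) - q * 1 + q
  | (N + 3) => a * mertC q a (N + 2) - q * mertC q a (N + 1)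

/-- `M(X) = ∑_{N=0}^{X-1} c_N`, the Mertens summatory function of the
Möbius function of an elliptic curve over `F_q` with Frobenius trace `a`. -/
def mertM (q a : ℤ) (X : ℕ) : ℤ := ∑ N ∈ Finset.range X, mertC q a N

lemma mertM_succ (q a : ℤ) (n : ℕ) : mertM q a (n+1) = mertM q a n + mertC q a n :=
  Finset.sum_range_succ _ _

lemma mertM_rec (q a : ℤ) : ∀ X : ℕ,
    mertM q a (X+3) = a * mertM q a (X+2) - q * mertM q a (X+1) := by
  intro X
  induction X with
  | zero =>
    show mertM q a 3 = a * mertM q a 2 - q * mertM q a 1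
    simp only [mertM, Finset.sum_range_succ, Finset.sum_range_zero, mertC]
    ring
  | succ n ih =>
    have hc : mertC q a (n+3) = a * mertC q a (n+2) - q * mertC q a (n+1) := rfl
    have e1 : mertM q a (n+4) = mertM q a (n+3) + mertC q a (n+3) := mertM_succ q a (n+3)
    have e2 : mertM q a (n+3) = mertM q a (n+2) + mertC q a (n+2) := mertM_succ q a (n+2)
    have e3 : mertM q a (n+2) = mertM q a (n+1) + mertC q a (n+1) := mertM_succ q a (n+1)
    show mertM q a (n+4) = a * mertM q a (n+3) - q * mertM q a (n+2)
    linear_combination e1 + hc - a * e2 + q * e3 + ih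

lemma mertM_per4 (q a : ℤ) (ha2 : a^2 = 2*q) (X : ℕ) :
    mertM q a (X+5) = -q^2 * mertM q a (X+1) := by
  have h1 := mertM_rec q a X
  have h2 := mertM_rec q a (X+1)
  have h3 := mertM_rec q a (X+2)
  have e2 : X+1+3 = X+4 := by omega
  have e2' : X+1+2 = X+3 := by omega
  have e2'' : X+1+1 = X+2 := by omega
  have e3 : X+2+3 = X+5 := by omega
  have e3' : X+2+2 = X+4 := by omega
  have e3'' : X+2+1 = X+3 := by omega
  rw [e2, e2', e2''] at h2
  rw [e3, e3', e3''] at h3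
  linear_combination h3 + a * h2 + q * h1 + mertM q a (X+3) * ha2

lemma mertM_vals (q a : ℤ) (ha2 : a^2 = 2*q) : ∀ t : ℕ,
    mertM q a (4*t+1) = (-1)^t * q^(2*t) ∧
    mertM q a (4*t+2) = (-1)^t * q^(2*t) * (a - q) ∧
    mertM q a (4*t+3) = (-1)^t * q^(2*t) * (q - a*q) ∧
    mertM q a (4*t+4) = (-1)^(t+1) * q^(2*t+2) := by
  intro t
  induction t with
  | zero =>
    refine ⟨?_, ?_, ?_, ?_⟩ <;>
      simp only [Nat.mul_zero, Nat.zero_add, mertM, Finset.sum_range_succ,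
        Finset.sum_range_zero, mertC, pow_zero, pow_succ]
    · ring
    · ring
    · linear_combination ha2
    · linear_combination (a - q) * ha2
  | succ n ih =>
    obtain ⟨i1, i2, i3, i4⟩ := ih
    refine ⟨?_, ?_, ?_, ?_⟩
    · rw [show 4*(n+1)+1 = (4*n)+5 from by omega, mertM_per4 q a ha2, i1]; ring
    · rw [show 4*(n+1)+2 = (4*n+1)+5 from by omega, mertM_per4 q a ha2,
        show 4*n+1+1 = 4*n+2 from by omega, i2]; ring
    · rw [show 4*(n+1)+3 = (4*n+2)+5 from by omega, mertM_per4 q a ha2,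
        show 4*n+2+1 = 4*n+3 from by omega, i3]; ring
    · rw [show 4*(n+1)+4 = (4*n+3)+5 from by omega, mertM_per4 q a ha2,
        show 4*n+3+1 = 4*n+4 from by omega, i4]; ring

lemma mkey (E : ℕ) (B : ℝ) : (2:ℝ)^E / (2:ℝ)^B = (2:ℝ)^((E:ℝ) - B) := by
  rw [← Real.rpow_natCast 2 E, ← Real.rpow_sub (by norm_num : (0:ℝ) < 2)]

theorem mertens_case_sqrt_2q (m : ℕ) (hm : 1 ≤ m) (hodd : Odd m) (q a : ℤ)
    (hq : q = 2 ^ m) (ha : a = 2 ^ ((m + 1) / 2)) :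
    ∀ X : ℕ, 1 ≤ X →
      (X % 8 = 0 → (mertM q a X : ℝ) / (2 : ℝ) ^ ((m : ℝ) * (X : ℝ) / 2) = 1) ∧
      (X % 8 = 1 → (mertM q a X : ℝ) / (2 : ℝ) ^ ((m : ℝ) * (X : ℝ) / 2) =
        (2 : ℝ) ^ (-(m : ℝ) / 2)) ∧
      (X % 8 = 2 → (mertM q a X : ℝ) / (2 : ℝ) ^ ((m : ℝ) * (X : ℝ) / 2) =
        -1 + (2 : ℝ) ^ (-((m : ℝ) - 1) / 2)) ∧
      (X % 8 = 3 → (mertM q a X : ℝ) / (2 : ℝ) ^ ((m : ℝ) * (X : ℝ) / 2) =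
        -Real.sqrt 2 + (2 : ℝ) ^ (-(m : ℝ) / 2)) ∧
      (X % 8 = 4 → (mertM q a X : ℝ) / (2 : ℝ) ^ ((m : ℝ) * (X : ℝ) / 2) = -1) ∧
      (X % 8 = 5 → (mertM q a X : ℝ) / (2 : ℝ) ^ ((m : ℝ) * (X : ℝ) / 2) =
        -(2 : ℝ) ^ (-(m : ℝ) / 2)) ∧
      (X % 8 = 6 → (mertM q a X : ℝ) / (2 : ℝ) ^ ((m : ℝ) * (X : ℝ) / 2) =
        1 - (2 : ℝ) ^ (-((m : ℝ) - 1) / 2)) ∧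
      (X % 8 = 7 → (mertM q a X : ℝ) / (2 : ℝ) ^ ((m : ℝ) * (X : ℝ) / 2) =
        Real.sqrt 2 - (2 : ℝ) ^ (-(m : ℝ) / 2)) := by
  obtain ⟨k, hk0⟩ := hodd
  have hk : m = 2*k + 1 := by omega
  have hak : a = 2^(k+1) := by rw [ha, show (m+1)/2 = k+1 from by omega]
  have hqk : q = 2^(2*k+1) := by rw [hq, hk]
  have ha2 : a^2 = 2*q := by rw [hak, hqk]; ring
  have hmR : (m:ℝ) = 2*(k:ℝ)+1 := by rw [hk]; push_cast; ring
  have hsq : Real.sqrt 2 = (2:ℝ)^((1:ℝ)/2) := by rw [Real.sqrt_eq_rpow]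
  intro X hX
  obtain ⟨t, r, hr4, hXd⟩ : ∃ t r, r < 4 ∧ X = 4*t + r + 1 :=
    ⟨(X-1)/4, (X-1)%4, by omega, by omega⟩
  have V := mertM_vals q a ha2 t
  refine ⟨?_, ?_, ?_, ?_, ?_, ?_, ?_, ?_⟩ <;> intro h
  · -- X % 8 = 0 : r = 3, t odd
    obtain ⟨s, hs⟩ : ∃ s, t = 2*s+1 := ⟨t/2, by omega⟩
    have hXR : (X:ℝ) = 8*(s:ℝ)+8 := by
      have : X = 8*s+8 := by omega
      rw [this]; push_cast; ring
    have hM : mertM q a X = 2^((2*k+1)*(4*s+4)) := by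
      rw [show X = 4*t+4 from by omega, V.2.2.2, hs, hqk]
      have hsgn : ((-1:ℤ))^(2*s+1+1) = 1 := Even.neg_one_pow ⟨s+1, by ring⟩
      rw [hsgn]; ring
    rw [hM]; push_cast
    rw [mkey]
    have e1 : (((2*k+1)*(4*s+4) : ℕ) : ℝ) - (m:ℝ)*(X:ℝ)/2 = 0 := by
      rw [hmR, hXR]; push_cast; ring
    rw [e1, Real.rpow_zero]
  · -- X % 8 = 1 : r = 0, t even
    obtain ⟨s, hs⟩ : ∃ s, t = 2*s := ⟨t/2, by omega⟩
    have hXR : (X:ℝ) = 8*(s:ℝ)+1 := by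
      have : X = 8*s+1 := by omega
      rw [this]; push_cast; ring
    have hM : mertM q a X = 2^((2*k+1)*(4*s)) := by
      rw [show X = 4*t+1 from by omega, V.1, hs, hqk]
      have hsgn : ((-1:ℤ))^(2*s) = 1 := Even.neg_one_pow ⟨s, by ring⟩
      rw [hsgn]; ring
    rw [hM]; push_cast
    rw [mkey]
    have e1 : (((2*k+1)*(4*s) : ℕ) : ℝ) - (m:ℝ)*(X:ℝ)/2 = -(m:ℝ)/2 := by
      rw [hmR, hXR]; push_cast; ring
    rw [e1]
  · -- X % 8 = 2 : r = 1, t even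
    obtain ⟨s, hs⟩ : ∃ s, t = 2*s := ⟨t/2, by omega⟩
    have hXR : (X:ℝ) = 8*(s:ℝ)+2 := by
      have : X = 8*s+2 := by omega
      rw [this]; push_cast; ring
    have hM : mertM q a X = 2^((2*k+1)*(4*s)+(k+1)) - 2^((2*k+1)*(4*s+1)) := by
      rw [show X = 4*t+2 from by omega, V.2.1, hs, hak, hqk]
      have hsgn : ((-1:ℤ))^(2*s) = 1 := Even.neg_one_pow ⟨s, by ring⟩
      rw [hsgn]; ring
    rw [hM]; push_cast
    rw [sub_div, mkey, mkey]
    have e1 : (((2*k+1)*(4*s)+(k+1) : ℕ) : ℝ) - (m:ℝ)*(X:ℝ)/2 = -((m:ℝ)-1)/2 := by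
      rw [hmR, hXR]; push_cast; ring
    have e2 : (((2*k+1)*(4*s+1) : ℕ) : ℝ) - (m:ℝ)*(X:ℝ)/2 = 0 := by
      rw [hmR, hXR]; push_cast; ring
    rw [e1, e2, Real.rpow_zero]; ring
  · -- X % 8 = 3 : r = 2, t even
    obtain ⟨s, hs⟩ : ∃ s, t = 2*s := ⟨t/2, by omega⟩
    have hXR : (X:ℝ) = 8*(s:ℝ)+3 := by
      have : X = 8*s+3 := by omega
      rw [this]; push_cast; ring
    have hM : mertM q a X = 2^((2*k+1)*(4*s+1)) - 2^((2*k+1)*(4*s+1)+(k+1)) := by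
      rw [show X = 4*t+3 from by omega, V.2.2.1, hs, hak, hqk]
      have hsgn : ((-1:ℤ))^(2*s) = 1 := Even.neg_one_pow ⟨s, by ring⟩
      rw [hsgn]; ring
    rw [hM]; push_cast
    rw [sub_div, mkey, mkey]
    have e1 : (((2*k+1)*(4*s+1) : ℕ) : ℝ) - (m:ℝ)*(X:ℝ)/2 = -(m:ℝ)/2 := by
      rw [hmR, hXR]; push_cast; ring
    have e2 : (((2*k+1)*(4*s+1)+(k+1) : ℕ) : ℝ) - (m:ℝ)*(X:ℝ)/2 = (1:ℝ)/2 := by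
      rw [hmR, hXR]; push_cast; ring
    rw [e1, e2, hsq]; ring
  · -- X % 8 = 4 : r = 3, t even
    obtain ⟨s, hs⟩ : ∃ s, t = 2*s := ⟨t/2, by omega⟩
    have hXR : (X:ℝ) = 8*(s:ℝ)+4 := by
      have : X = 8*s+4 := by omega
      rw [this]; push_cast; ring
    have hM : mertM q a X = -(2^((2*k+1)*(4*s+2))) := by
      rw [show X = 4*t+4 from by omega, V.2.2.2, hs, hqk]
      have hsgn : ((-1:ℤ))^(2*s+1) = -1 := Odd.neg_one_pow ⟨s, by ring⟩
      rw [hsgn]; ring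
    rw [hM]; push_cast
    rw [neg_div, mkey]
    have e1 : (((2*k+1)*(4*s+2) : ℕ) : ℝ) - (m:ℝ)*(X:ℝ)/2 = 0 := by
      rw [hmR, hXR]; push_cast; ring
    rw [e1, Real.rpow_zero]
  · -- X % 8 = 5 : r = 0, t odd
    obtain ⟨s, hs⟩ : ∃ s, t = 2*s+1 := ⟨t/2, by omega⟩
    have hXR : (X:ℝ) = 8*(s:ℝ)+5 := by
      have : X = 8*s+5 := by omega
      rw [this]; push_cast; ring
    have hM : mertM q a X = -(2^((2*k+1)*(4*s+2))) := by
      rw [show X = 4*t+1 from by omega, V.1, hs, hqk]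
      have hsgn : ((-1:ℤ))^(2*s+1) = -1 := Odd.neg_one_pow ⟨s, by ring⟩
      rw [hsgn]; ring
    rw [hM]; push_cast
    rw [neg_div, mkey]
    have e1 : (((2*k+1)*(4*s+2) : ℕ) : ℝ) - (m:ℝ)*(X:ℝ)/2 = -(m:ℝ)/2 := by
      rw [hmR, hXR]; push_cast; ring
    rw [e1]
  · -- X % 8 = 6 : r = 1, t odd
    obtain ⟨s, hs⟩ : ∃ s, t = 2*s+1 := ⟨t/2, by omega⟩
    have hXR : (X:ℝ) = 8*(s:ℝ)+6 := by
      have : X = 8*s+6 := by omega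
      rw [this]; push_cast; ring
    have hM : mertM q a X = 2^((2*k+1)*(4*s+3)) - 2^((2*k+1)*(4*s+2)+(k+1)) := by
      rw [show X = 4*t+2 from by omega, V.2.1, hs, hak, hqk]
      have hsgn : ((-1:ℤ))^(2*s+1) = -1 := Odd.neg_one_pow ⟨s, by ring⟩
      rw [hsgn]; ring
    rw [hM]; push_cast
    rw [sub_div, mkey, mkey]
    have e1 : (((2*k+1)*(4*s+3) : ℕ) : ℝ) - (m:ℝ)*(X:ℝ)/2 = 0 := by
      rw [hmR, hXR]; push_cast; ring
    have e2 : (((2*k+1)*(4*s+2)+(k+1) : ℕ) : ℝ) - (m:ℝ)*(X:ℝ)/2 = -((m:ℝ)-1)/2 := by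
      rw [hmR, hXR]; push_cast; ring
    rw [e1, e2, Real.rpow_zero]
  · -- X % 8 = 7 : r = 2, t odd
    obtain ⟨s, hs⟩ : ∃ s, t = 2*s+1 := ⟨t/2, by omega⟩
    have hXR : (X:ℝ) = 8*(s:ℝ)+7 := by
      have : X = 8*s+7 := by omega
      rw [this]; push_cast; ring
    have hM : mertM q a X = 2^((2*k+1)*(4*s+3)+(k+1)) - 2^((2*k+1)*(4*s+3)) := by
      rw [show X = 4*t+3 from by omega, V.2.2.1, hs, hak, hqk]
      have hsgn : ((-1:ℤ))^(2*s+1) = -1 := Odd.neg_one_pow ⟨s, by ring⟩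
      rw [hsgn]; ring
    rw [hM]; push_cast
    rw [sub_div, mkey, mkey]
    have e1 : (((2*k+1)*(4*s+3)+(k+1) : ℕ) : ℝ) - (m:ℝ)*(X:ℝ)/2 = (1:ℝ)/2 := by
      rw [hmR, hXR]; push_cast; ring
    have e2 : (((2*k+1)*(4*s+3) : ℕ) : ℝ) - (m:ℝ)*(X:ℝ)/2 = -(m:ℝ)/2 := by
      rw [hmR, hXR]; push_cast; ring
    rw [e1, e2, hsq]
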